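/- Let κ ≥ 2. Over the alphabet Σ = V ∪ {x_0, …, x_n} ∪ {y_0, …, y_m} ∪ {z} (new separator letters) define the target T = z x_0 (∏_{i=1}^n v_i^{κ−1} x_i) z y_0 (∏_{j=1}^m e_j y_j), where v_i^{κ−1} denotes κ−1 consecutive copies of the letter v_i. Take pairwise distinct blocks Z, Z′; X_{i,j} and X′_{i,j} for every ordered pair (i, j) with 1 ≤ i, j ≤ κ and i ≠ j; and A_0, A_1, …, A_κ, B_0, and B_{i,j} for 1 ≤ i < j ≤ κ. Define the patterns 𝒳 = Z A_0 ∏_{i=1}^κ [ (∏_{j≠i, j increasing} X_{i,j}) A_i ] Z′ B_0 ∏_{1 ≤ i < j ≤ κ} [ X′_{i,j} X′_{j,i} B_{i,j} ] and 𝒳′ = Z′ A_0 ∏_{i=1}^κ [ (∏_{j≠i, j increasing} X′_{i,j}) A_i ] Z B_0 ∏_{1 ≤ i < j ≤ κ} [ X_{i,j} X_{j,i} B_{i,j} ], the products over pairs (i, j) taken in lexicographic order; note each pattern is duplicate-free and both equations share the same target T. Then the system {T ≡ 𝒳, T ≡ 𝒳′} is satisfied by some assignment if and only if G contains a clique of size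 κ. (Correctness of the reduction in Theorem 4.2.) -/

import Mathlib

namespace Stmt6

/-- The pairs `(i, j)` with `i < j`, listed in lexicographic order. -/
def pairs (κ : ℕ) : List (Fin κ × Fin κ) :=
  (List.finRange κ).flatMap fun i =>
    ((List.finRange κ).filter fun j => decide (i < j)).map fun j => (i, j)

/-- The alphabet `Σ = V ∪ {x₀,…,x_n} ∪ {y₀,…,y_m} ∪ {z}`. -/
abbrev Letter (n m : ℕ) := Fin n ⊕ (Fin (n + 1) ⊕ (Fin (m + 1) ⊕ Unit))

def vtx {n m : ℕ} (i : Fin n) : Letter n m := Sum.inl i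
def xSep {n m : ℕ} (i : Fin (n + 1)) : Letter n m := Sum.inr (Sum.inl i)
def ySep {n m : ℕ} (j : Fin (m + 1)) : Letter n m := Sum.inr (Sum.inr (Sum.inl j))
def zSep {n m : ℕ} : Letter n m := Sum.inr (Sum.inr (Sum.inr ()))

/-- The blocks: the starting blocks `Z` and `Z'` (`Z b` with `b` the primedness),
the coding blocks `X_{i,j}` and `X'_{i,j}` (`X b i j`, used for `i ≠ j`), and the
gap blocks `A₀,…,A_κ`, `B₀` and `B_{i,j}` (used for `i < j`). -/
inductive Blk (κ : ℕ) where
  | Z (primed : Bool)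
  | X (primed : Bool) (i j : Fin κ)
  | A (i : Fin (κ + 1))
  | B0
  | B (i j : Fin κ)

/-- The common target string
`T = z x₀ (∏_{i=1}^n vᵢ^{κ-1} xᵢ) z y₀ (∏_{j=1}^m e_j y_j)`. -/
def target (n m κ : ℕ) (edges : Fin m → Fin n × Fin n) : List (Letter n m) :=
  [zSep, xSep 0] ++
  ((List.finRange n).flatMap fun i =>
    List.replicate (κ - 1) (vtx i) ++ [xSep i.succ]) ++
  [zSep, ySep 0] ++
  ((List.finRange m).flatMap fun j =>
    [vtx (edges j).1, vtx (edges j).2, ySep j.succ])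

/-- The pattern
`Z A₀ ∏_{i=1}^κ [(∏_{j≠i} X_{i,j}) A_i] Z' B₀ ∏_{i<j} [X'_{i,j} X'_{j,i} B_{i,j}]`;
`pattern false` is `𝒳` and `pattern true` is `𝒳'` (with the roles of the primed and
unprimed blocks exchanged). -/
def pattern (κ : ℕ) (b : Bool) : List (Blk κ) :=
  [Blk.Z b, Blk.A 0] ++
  ((List.finRange κ).flatMap fun i =>
    (((List.finRange κ).filter fun j => decide (j ≠ i)).map fun j => Blk.X b i j) ++
      [Blk.A i.succ]) ++
  [Blk.Z (!b), Blk.B0] ++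
  ((pairs κ).flatMap fun p =>
    [Blk.X (!b) p.1 p.2, Blk.X (!b) p.2 p.1, Blk.B p.1 p.2])

set_option linter.dupNamespace false

section ListAux

variable {β ι : Type*}

lemma drop_eq_take_append_drop (X : List β) {a b : ℕ} (hab : a ≤ b) :
    X.drop a = (X.drop a).take (b - a) ++ X.drop b := by
  conv_lhs => rw [← List.take_append_drop (b - a) (X.drop a)]
  rw [List.drop_drop, Nat.add_sub_cancel' hab]

lemma flatMap_eq_drop (X : List β) (f : ι → List β) :
    ∀ (L : List ι) (pos : ℕ → ℕ),
      (∀ (t : ℕ) (h : t < L.length), X.drop (pos t) = f (L[t]'h) ++ X.drop (pos (t + 1))) →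
      X.drop (pos L.length) = [] →
      L.flatMap f = X.drop (pos 0)
  | [], pos, _, hend => by simpa using hend.symm
  | a :: L, pos, hstep, hend => by
    have h0 := hstep 0 (by simp)
    simp only [List.getElem_cons_zero] at h0
    rw [List.flatMap_cons,
      flatMap_eq_drop X f L (fun t => pos (t + 1))
        (fun t ht => by
          have h := hstep (t + 1) (by simpa using Nat.succ_lt_succ ht)
          rw [List.getElem_cons_succ] at h
          exact h)
        (by simpa using hend)]
    exact h0.symm

lemma drop_mul_flatMap (f : ι → List β) (r : ℕ) (hr : ∀ i, (f i).length = r) :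
    ∀ (k : ℕ) (L : List ι), (L.flatMap f).drop (k * r) = (L.drop k).flatMap f
  | 0, L => by simp
  | k + 1, [] => by simp
  | k + 1, a :: L => by
    rw [List.flatMap_cons, show (k + 1) * r = (f a).length + k * r by rw [hr]; ring,
      List.drop_length_add_append, List.drop_succ_cons, drop_mul_flatMap f r hr k L]

lemma length_le_length_flatMap (f : ι → List β) :
    ∀ (L : List ι), (∀ i ∈ L, f i ≠ []) → L.length ≤ (L.flatMap f).length
  | [], _ => le_rfl
  | a :: L, h => by
    rw [List.flatMap_cons, List.length_append, List.length_cons]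
    have h1 : 0 < (f a).length := List.length_pos_iff.2 (h a (by simp))
    have h2 := length_le_length_flatMap f L (fun i hi => h i (by simp [hi]))
    omega

lemma length_flatMap_const (f : ι → List β) (r : ℕ) (hr : ∀ i, (f i).length = r) :
    ∀ L : List ι, (L.flatMap f).length = L.length * r
  | [] => by simp
  | a :: L => by
    rw [List.flatMap_cons, List.length_append, hr, length_flatMap_const f r hr L,
      List.length_cons]
    ring

lemma flatMap_const_singleton (a : β) :
    ∀ L : List ι, (L.flatMap fun _ => [a]) = List.replicate L.length a
  | [] => rfl
  | b :: L => by
    rw [List.flatMap_cons, List.length_cons, List.replicate_succ,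
      flatMap_const_singleton a L]
    rfl

lemma pieces_eq_singleton (f : ι → List β) (a : β) :
    ∀ L : List ι, (∀ i ∈ L, f i ≠ []) →
      L.flatMap f = List.replicate L.length a → ∀ i ∈ L, f i = [a]
  | [], _, _, i, hi => absurd hi (by simp)
  | b :: L, hne, heq, i, hi => by
    rw [List.flatMap_cons, List.length_cons, List.replicate_succ] at heq
    obtain ⟨c, t, hfb⟩ : ∃ c t, f b = c :: t := by
      cases hfb : f b with
      | nil => exact absurd hfb (hne b (by simp))
      | cons c t => exact ⟨c, t, rfl⟩
    rw [hfb, List.cons_append] at heq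
    have hc : c = a := (List.cons.injEq _ _ _ _ ▸ heq).1
    have heq2 : t ++ L.flatMap f = List.replicate L.length a :=
      (List.cons.injEq _ _ _ _ ▸ heq).2
    have hlen : t.length + (L.flatMap f).length = L.length := by
      have := congrArg List.length heq2
      simpa using this
    have hL : L.length ≤ (L.flatMap f).length :=
      length_le_length_flatMap f L (fun i hi => hne i (by simp [hi]))
    have ht : t = [] := List.eq_nil_of_length_eq_zero (by omega)
    rcases List.mem_cons.1 hi with h | h
    · subst h; rw [hfb, ht, hc]
    · refine pieces_eq_singleton f a L (fun i hi => hne i (by simp [hi])) ?_ i h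
      rw [ht] at heq2; simpa using heq2

lemma pairwise_flatMap {α : Type*} (R : α → α → Prop) (f : ι → List α) :
    ∀ L : List ι,
      List.Pairwise (fun a b => ∀ x ∈ f a, ∀ y ∈ f b, R x y) L →
      (∀ a ∈ L, List.Pairwise R (f a)) →
      List.Pairwise R (L.flatMap f)
  | [], _, _ => List.Pairwise.nil
  | a :: L, hp, hin => by
    rw [List.flatMap_cons, List.pairwise_append]
    refine ⟨hin a (by simp), pairwise_flatMap R f L (hp.tail) (fun b hb => hin b (by simp [hb])), ?_⟩
    intro x hx y hy
    obtain ⟨b, hb, hyb⟩ := List.mem_flatMap.1 hy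
    exact (List.pairwise_cons.1 hp).1 b hb x hx y hyb

lemma flatMap_split (f : ι → List β) {L L1 L2 : List ι} {a : ι} (h : L = L1 ++ a :: L2) :
    L.flatMap f = L1.flatMap f ++ (f a ++ L2.flatMap f) := by
  rw [h, List.flatMap_append, List.flatMap_cons]

inductive RunForm (r : ℕ) (P : List β → Prop) (Sep : β → Prop) : List β → Prop
  | nil : RunForm r P Sep []
  | sep (s : β) (l : List β) : Sep s → RunForm r P Sep l → RunForm r P Sep (s :: l)
  | run (g : List β) (s : β) (l : List β) : g.length = r → P g → Sep s →
      RunForm r P Sep l → RunForm r P Sep (g ++ s :: l)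

lemma RunForm.infix {r : ℕ} {P : List β → Prop} {Sep : β → Prop} (hr : 1 ≤ r)
    {X : List β} (hX : RunForm r P Sep X) :
    ∀ (u g w : List β), X = u ++ g ++ w →
      (∀ x ∈ g, ¬ Sep x) → r ≤ g.length → P g := by
  induction hX with
  | nil =>
    intro u g w he hg hlen
    have : g.length = 0 := by
      have := congrArg List.length he
      simp at this
      omega
    omega
  | sep s l hs _ ih =>
    intro u g w he hg hlen
    cases u with
    | nil =>
      simp only [List.nil_append] at he
      cases g with
      | nil => simp at hlen; omega
      | cons c g' =>
        have hc : s = c := by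
          have := congrArg (fun x => x.head?) he
          simpa using this
        exact absurd hs (hc ▸ hg c (by simp))
    | cons a u' =>
      have h1 : l = u' ++ g ++ w := by
        simpa using congrArg List.tail he
      exact ih u' g w h1 hg hlen
  | run g0 s l hrun hP hs _ ih =>
    intro u g w he hg hglen
    by_cases h1 : u.length + g.length ≤ r
    · have hu0 : u.length = 0 := by omega
      have hgr : g.length = r := by omega
      have hu : u = [] := List.eq_nil_of_length_eq_zero hu0
      subst hu
      simp only [List.nil_append] at he
      have hgg : g = g0 := by
        have h2 := congrArg (List.take r) he
        rw [← hrun, List.take_left] at h2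
        rw [hrun, ← hgr, List.take_left] at h2
        exact h2.symm
      exact hgg ▸ hP
    · by_cases h2 : u.length ≤ r
      · exfalso
        have hXlen : r < (g0 ++ s :: l).length := by
          rw [List.length_append, hrun]; simp
        have e1 : (g0 ++ s :: l)[r]'hXlen = s := by
          rw [List.getElem_append_right (by omega)]
          simp [hrun]
        have hlt : r - u.length < g.length := by omega
        have hlt2 : r < (u ++ g).length := by
          rw [List.length_append]; omega
        have e2 : (g0 ++ s :: l)[r]'hXlen = g[r - u.length]'hlt := by
          have h5 : (u ++ g ++ w)[r]'(by rw [← he]; exact hXlen) = g[r - u.length]'hlt := by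
            rw [List.getElem_append_left hlt2, List.getElem_append_right h2]
          rw [← h5]
          congr 1
        have : s ∈ g := by
          rw [← e1, e2]; exact List.getElem_mem _
        exact hg s this hs
      · have h3 := congrArg (List.drop (r + 1)) he
        rw [show r + 1 = g0.length + 1 by rw [hrun]] at h3
        rw [List.drop_length_add_append, List.drop_one, List.tail_cons] at h3
        rw [List.drop_append_of_le_length (by rw [List.length_append]; omega),
          List.drop_append_of_le_length (by omega)] at h3
        exact ih (u.drop (g0.length + 1)) g w h3 hg hglen

end ListAux


-- begin my code
section Defs

variable (n m κ : ℕ) (edges : Fin m → Fin n × Fin n)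

/-- The middle part of the first half of the target. -/
def runsX : List (Letter n m) :=
  (List.finRange n).flatMap fun i => List.replicate (κ - 1) (vtx i) ++ [xSep i.succ]

/-- The middle part of the second half of the target. -/
def runsY : List (Letter n m) :=
  (List.finRange m).flatMap fun j => [vtx (edges j).1, vtx (edges j).2, ySep j.succ]

/-- The separators: non-vertex letters. -/
def IsSep (x : Letter n m) : Prop := ∃ y, x = Sum.inr y

lemma target_eq :
    target n m κ edges =
      (zSep :: xSep 0 :: runsX n m κ) ++ (zSep :: ySep 0 :: runsY n m edges) := by
  simp [target, runsX, runsY]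

lemma zSep_not_mem_runsX : zSep ∉ runsX n m κ := by
  simp [runsX, vtx, xSep, zSep]

lemma zSep_not_mem_runsY : zSep ∉ runsY n m edges := by
  simp [runsY, vtx, ySep, zSep]

lemma mem_runsX {x : Letter n m} (hx : x ∈ runsX n m κ) :
    (∃ w, x = xSep w) ∨ ∃ w, x = vtx w := by
  simp only [runsX, List.mem_flatMap, List.mem_append, List.mem_replicate,
    List.mem_singleton] at hx
  obtain ⟨i, -, h | h⟩ := hx
  · exact Or.inr ⟨i, h.2⟩
  · exact Or.inl ⟨i.succ, h⟩

lemma mem_runsY {x : Letter n m} (hx : x ∈ runsY n m edges) :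
    (∃ w, x = ySep w) ∨ ∃ w, x = vtx w := by
  simp only [runsY, List.mem_flatMap, List.mem_cons, List.not_mem_nil, or_false] at hx
  obtain ⟨j, -, h | h | h⟩ := hx
  · exact Or.inr ⟨_, h⟩
  · exact Or.inr ⟨_, h⟩
  · exact Or.inl ⟨_, h⟩

lemma runForm_runsX (hκ : 1 ≤ κ) :
    RunForm (κ - 1) (fun g => ∃ c, g = List.replicate (κ - 1) (vtx c))
      (IsSep n m) (zSep :: xSep 0 :: runsX n m κ) := by
  refine RunForm.sep _ _ ⟨_, rfl⟩ (RunForm.sep _ _ ⟨_, rfl⟩ ?_)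
  rw [runsX]
  generalize List.finRange n = L
  induction L with
  | nil => exact RunForm.nil
  | cons a L ih =>
    rw [List.flatMap_cons, List.append_assoc, List.singleton_append]
    exact RunForm.run _ _ _ List.length_replicate ⟨a, rfl⟩ ⟨_, rfl⟩ ih

lemma runForm_runsY :
    RunForm 2 (fun g => ∃ e, g = [vtx (edges e).1, vtx (edges e).2])
      (IsSep n m) (zSep :: ySep 0 :: runsY n m edges) := by
  refine RunForm.sep _ _ ⟨_, rfl⟩ (RunForm.sep _ _ ⟨_, rfl⟩ ?_)
  rw [runsY]
  generalize List.finRange m = L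
  induction L with
  | nil => exact RunForm.nil
  | cons a L ih =>
    rw [List.flatMap_cons]
    exact RunForm.run [vtx (edges a).1, vtx (edges a).2] _ _ rfl ⟨a, rfl⟩ ⟨_, rfl⟩ ih

lemma not_isSep_vtx (w : Fin n) : ¬ IsSep n m (vtx w) := by
  simp [IsSep, vtx]

lemma mem_pairs {κ : ℕ} {p : Fin κ × Fin κ} : p ∈ pairs κ ↔ p.1 < p.2 := by
  constructor
  · intro h
    simp only [pairs, List.mem_flatMap, List.mem_map, List.mem_filter] at h
    obtain ⟨i, -, j, ⟨-, hj⟩, rfl⟩ := h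
    exact of_decide_eq_true hj
  · intro h
    simp only [pairs, List.mem_flatMap, List.mem_map, List.mem_filter]
    exact ⟨p.1, List.mem_finRange _, p.2, ⟨List.mem_finRange _, decide_eq_true h⟩, rfl⟩

/-- Lexicographic strict order on pairs. -/
def PLex {κ : ℕ} (p q : Fin κ × Fin κ) : Prop :=
  p.1 < q.1 ∨ (p.1 = q.1 ∧ p.2 < q.2)

lemma pairs_pairwise {κ : ℕ} : List.Pairwise PLex (pairs κ) := by
  rw [pairs]
  apply pairwise_flatMap
  · have hfr : List.Pairwise (· < ·) (List.finRange κ) := List.pairwise_lt_finRange κ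
    refine hfr.imp ?_
    intro a b hab x hx y hy
    simp only [List.mem_map, List.mem_filter] at hx hy
    obtain ⟨j, -, rfl⟩ := hx
    obtain ⟨j', -, rfl⟩ := hy
    exact Or.inl hab
  · intro a _
    rw [List.pairwise_map]
    have : List.Pairwise (· < ·) ((List.finRange κ).filter fun j => decide (a < j)) :=
      List.Pairwise.sublist List.filter_sublist (List.pairwise_lt_finRange κ)
    exact this.imp fun h => Or.inr ⟨rfl, h⟩

lemma pairs_nodup {κ : ℕ} : (pairs κ).Nodup :=
  pairs_pairwise.imp (by
    rintro ⟨a₁, a₂⟩ ⟨b₁, b₂⟩ h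
    rcases h with h | ⟨h1, h2⟩
    · exact fun he => absurd (congrArg Prod.fst he) (by simpa using h.ne)
    · exact fun he => absurd (congrArg Prod.snd he) (by simpa using h2.ne))

lemma filter_ne_length {κ : ℕ} (i : Fin κ) :
    ((List.finRange κ).filter fun j => decide (j ≠ i)).length = κ - 1 := by
  have h1 : (List.finRange κ).filter (fun j => decide (j ≠ i)) =
      (List.finRange κ).erase i := by
    rw [(List.nodup_finRange κ).erase_eq_filter i]
    apply List.filter_congr
    intro a _
    by_cases h : a = i <;> simp [h]
  rw [h1, List.length_erase_of_mem (List.mem_finRange i), List.length_finRange]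

lemma mem_filter_ne {κ : ℕ} {i j : Fin κ} :
    j ∈ (List.finRange κ).filter (fun j => decide (j ≠ i)) ↔ j ≠ i := by
  simp [List.mem_filter]

lemma flatMap_pattern (σ : Blk κ → List (Letter n m)) (b : Bool) :
    (pattern κ b).flatMap σ =
      σ (Blk.Z b) ++ (σ (Blk.A 0) ++
        ((List.finRange κ).flatMap fun i =>
          (((List.finRange κ).filter fun j => decide (j ≠ i)).flatMap
            fun j => σ (Blk.X b i j)) ++ σ (Blk.A i.succ))) ++
      (σ (Blk.Z (!b)) ++ (σ Blk.B0 ++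
        ((pairs κ).flatMap fun p =>
          σ (Blk.X (!b) p.1 p.2) ++ (σ (Blk.X (!b) p.2 p.1) ++ σ (Blk.B p.1 p.2))))) := by
  simp [pattern, List.flatMap_append, List.flatMap_assoc, List.flatMap_map,
    Function.comp, List.append_assoc]

end Defs

section Backward

variable (n m κ : ℕ) (edges : Fin m → Fin n × Fin n)

def posA (u : Fin κ → Fin n) (t : ℕ) : ℕ :=
  if h : t < κ then (u ⟨t, h⟩ : ℕ) * κ else n * κ

def posB (E : Fin κ × Fin κ → ℕ) (t : ℕ) : ℕ :=
  if h : t < (pairs κ).length then E ((pairs κ)[t]) * 3 else m * 3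

def asg (u : Fin κ → Fin n) (E : Fin κ × Fin κ → ℕ) (N : Fin κ × Fin κ → ℕ) :
    Blk κ → List (Letter n m)
  | .Z _ => [zSep]
  | .X _ i j => [vtx (u i)]
  | .A t =>
    if (t : ℕ) = 0 then xSep 0 :: (runsX n m κ).take (posA n κ u 0)
    else ((runsX n m κ).drop (posA n κ u ((t : ℕ) - 1) + (κ - 1))).take
      (posA n κ u (t : ℕ) - (posA n κ u ((t : ℕ) - 1) + (κ - 1)))
  | .B0 => ySep 0 :: (runsY n m edges).take (posB m κ E 0)
  | .B i j =>
    if (i, j) ∈ pairs κ then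
      ((runsY n m edges).drop (E (i, j) * 3 + 2)).take (N (i, j) - (E (i, j) * 3 + 2))
    else [zSep]

lemma length_runsX (hκ : 1 ≤ κ) : (runsX n m κ).length = n * κ := by
  rw [runsX, length_flatMap_const _ κ (fun i => by simp; omega), List.length_finRange]

lemma length_runsY : (runsY n m edges).length = m * 3 := by
  rw [runsY, length_flatMap_const (fun j => [vtx (edges j).1, vtx (edges j).2, ySep j.succ]) 3
    (fun j => rfl), List.length_finRange]

lemma drop_runsX_run (hκ : 1 ≤ κ) (v : Fin n) :
    (runsX n m κ).drop ((v : ℕ) * κ) =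
      List.replicate (κ - 1) (vtx v) ++ (runsX n m κ).drop ((v : ℕ) * κ + (κ - 1)) := by
  have h : (runsX n m κ).drop ((v : ℕ) * κ) =
      List.replicate (κ - 1) (vtx v) ++ (xSep v.succ ::
        ((List.finRange n).drop ((v : ℕ) + 1)).flatMap
          (fun i => List.replicate (κ - 1) (vtx i) ++ [xSep i.succ])) := by
    rw [runsX, drop_mul_flatMap _ κ (fun i => by simp; omega) v,
      List.drop_eq_getElem_cons (by simp [v.isLt]), List.flatMap_cons]
    simp [List.getElem_finRange, List.append_assoc]
  have h2 := congrArg (List.drop (κ - 1)) h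
  rw [List.drop_drop, List.drop_left' List.length_replicate] at h2
  rw [h, h2]

lemma drop_runsY_run (e : Fin m) :
    (runsY n m edges).drop ((e : ℕ) * 3) =
      [vtx (edges e).1, vtx (edges e).2] ++ (runsY n m edges).drop ((e : ℕ) * 3 + 2) := by
  have h : (runsY n m edges).drop ((e : ℕ) * 3) =
      [vtx (edges e).1, vtx (edges e).2] ++ (ySep e.succ ::
        ((List.finRange m).drop ((e : ℕ) + 1)).flatMap
          (fun j => [vtx (edges j).1, vtx (edges j).2, ySep j.succ])) := by
    rw [runsY, drop_mul_flatMap (fun j => [vtx (edges j).1, vtx (edges j).2, ySep j.succ]) 3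
      (fun j => rfl) e,
      List.drop_eq_getElem_cons (by simp [e.isLt]), List.flatMap_cons]
    simp [List.getElem_finRange]
  have h2 := congrArg (List.drop 2) h
  rw [List.drop_drop, List.drop_left' (by rfl)] at h2
  rw [h, h2]

variable {n m κ} {edges} {u : Fin κ → Fin n} {E N : Fin κ × Fin κ → ℕ}

lemma posA_le (t : ℕ) : posA n κ u t ≤ n * κ := by
  rw [posA]
  split
  · exact Nat.mul_le_mul_right κ (le_of_lt (u _).isLt)
  · exact le_rfl

lemma posA_step (hu : StrictMono u) {t : ℕ} (ht : t < κ) :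
    posA n κ u t + κ ≤ posA n κ u (t + 1) := by
  have h0 : posA n κ u t = (u ⟨t, ht⟩ : ℕ) * κ := by simp [posA, ht]
  rw [h0, ← Nat.succ_mul]
  by_cases h : t + 1 < κ
  · have hlt : u ⟨t, ht⟩ < u ⟨t + 1, h⟩ := hu (by simp)
    simp only [posA, h, dif_pos]
    exact Nat.mul_le_mul_right κ hlt
  · simp only [posA, h, dif_neg, not_false_iff]
    exact Nat.mul_le_mul_right κ (u _).isLt

lemma asg_A_succ (i : Fin κ) :
    asg n m κ edges u E N (Blk.A i.succ) =
      ((runsX n m κ).drop (posA n κ u (i : ℕ) + (κ - 1))).take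
        (posA n κ u ((i : ℕ) + 1) - (posA n κ u (i : ℕ) + (κ - 1))) := by
  have h1 : ((i.succ : Fin (κ + 1)) : ℕ) = (i : ℕ) + 1 := by simp
  simp only [asg, h1, Nat.add_sub_cancel]
  rw [if_neg (by omega)]

lemma asg_flatMap (hκ : 2 ≤ κ) (hu : StrictMono u)
    (hE : ∀ p : Fin κ × Fin κ, p.1 < p.2 →
      ∃ he : E p < m, edges ⟨E p, he⟩ = (u p.1, u p.2))
    (hEmono : ∀ t (h : t + 1 < (pairs κ).length),
      E ((pairs κ)[t]'(by omega)) < E ((pairs κ)[t + 1]'h))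
    (hN : ∀ (t : ℕ) (ht : t < (pairs κ).length), N ((pairs κ)[t]) = posB m κ E (t + 1))
    (b : Bool) :
    (pattern κ b).flatMap (asg n m κ edges u E N) = target n m κ edges := by
  rw [flatMap_pattern, target_eq]
  have hA0 : asg n m κ edges u E N (Blk.A 0) =
      xSep 0 :: (runsX n m κ).take (posA n κ u 0) := by
    simp [asg]
  have hfirst : ((List.finRange κ).flatMap fun i =>
      (((List.finRange κ).filter fun j => decide (j ≠ i)).flatMap
        fun j => asg n m κ edges u E N (Blk.X b i j)) ++ asg n m κ edges u E N (Blk.A i.succ)) =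
      (runsX n m κ).drop (posA n κ u 0) := by
    have hconst : ∀ i : Fin κ,
        (((List.finRange κ).filter fun j => decide (j ≠ i)).flatMap
          fun j => asg n m κ edges u E N (Blk.X b i j)) =
          List.replicate (κ - 1) (vtx (u i)) := by
      intro i
      rw [show (fun j => asg n m κ edges u E N (Blk.X b i j)) = fun _ => [vtx (u i)] from rfl,
        flatMap_const_singleton, filter_ne_length]
    refine flatMap_eq_drop _ _ _ (posA n κ u) ?_ ?_
    · intro t ht
      rw [List.length_finRange] at ht
      have hget : (List.finRange κ)[t]'(by simpa using ht) = ⟨t, ht⟩ := by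
        simp [List.getElem_finRange]
      rw [hget, hconst, asg_A_succ]
      simp only [Fin.val_mk]
      have hpos : posA n κ u t = ((u ⟨t, ht⟩ : ℕ)) * κ := by simp [posA, ht]
      rw [List.append_assoc]
      conv_lhs => rw [hpos, drop_runsX_run n m κ (by omega) (u ⟨t, ht⟩), ← hpos]
      congr 1
      exact drop_eq_take_append_drop _ (by have := posA_step hu ht; omega)
    · rw [List.length_finRange]
      have : posA n κ u κ = n * κ := by simp [posA]
      rw [this, ← length_runsX n m κ (by omega), List.drop_length]
  have hB0 : asg n m κ edges u E N Blk.B0 =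
      ySep 0 :: (runsY n m edges).take (posB m κ E 0) := rfl
  have hsecond : ((pairs κ).flatMap fun p =>
      asg n m κ edges u E N (Blk.X (!b) p.1 p.2) ++
        (asg n m κ edges u E N (Blk.X (!b) p.2 p.1) ++
          asg n m κ edges u E N (Blk.B p.1 p.2))) =
      (runsY n m edges).drop (posB m κ E 0) := by
    refine flatMap_eq_drop _ _ _ (posB m κ E) ?_ ?_
    · intro t ht
      have hp : (pairs κ)[t] ∈ pairs κ := List.getElem_mem ht
      have hp12 : ((pairs κ)[t]).1 < ((pairs κ)[t]).2 := mem_pairs.1 hp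
      obtain ⟨hEm, hEe⟩ := hE _ hp12
      have hpos : posB m κ E t = E ((pairs κ)[t]) * 3 := by simp [posB, ht]
      have hBp : asg n m κ edges u E N (Blk.B ((pairs κ)[t]).1 ((pairs κ)[t]).2) =
          ((runsY n m edges).drop (E ((pairs κ)[t]) * 3 + 2)).take
            (posB m κ E (t + 1) - (E ((pairs κ)[t]) * 3 + 2)) := by
        simp only [asg]
        rw [if_pos (by rw [Prod.mk.eta]; exact hp)]
        rw [Prod.mk.eta, hN t ht]
      have hXa : asg n m κ edges u E N (Blk.X (!b) ((pairs κ)[t]).1 ((pairs κ)[t]).2) =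
          [vtx (u ((pairs κ)[t]).1)] := rfl
      have hXb2 : asg n m κ edges u E N (Blk.X (!b) ((pairs κ)[t]).2 ((pairs κ)[t]).1) =
          [vtx (u ((pairs κ)[t]).2)] := rfl
      rw [hXa, hXb2, hBp, hpos]
      have h1 := drop_runsY_run n m edges ⟨E ((pairs κ)[t]), hEm⟩
      have he1 : (edges ⟨E ((pairs κ)[t]), hEm⟩).1 = u ((pairs κ)[t]).1 := by rw [hEe]
      have he2 : (edges ⟨E ((pairs κ)[t]), hEm⟩).2 = u ((pairs κ)[t]).2 := by rw [hEe]
      rw [he1, he2] at h1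
      rw [h1]
      have hle : E ((pairs κ)[t]) * 3 + 2 ≤ posB m κ E (t + 1) := by
        by_cases h : t + 1 < (pairs κ).length
        · have := hEmono t h
          simp only [posB, h, dif_pos]
          omega
        · simp only [posB, h, dif_neg, not_false_iff]
          omega
      conv_lhs => rw [drop_eq_take_append_drop _ hle]
      simp [List.append_assoc]
    · have : posB m κ E (pairs κ).length = m * 3 := by simp [posB]
      rw [this, ← length_runsY n m edges, List.drop_length]
  rw [hA0, hfirst, hB0, hsecond]
  simp [show ∀ b', asg n m κ edges u E N (Blk.Z b') = [zSep] from fun _ => rfl,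
    List.append_assoc]

end Backward

section Forward

variable {n m κ : ℕ} {edges : Fin m → Fin n × Fin n}

lemma getElem_cons_mem {α : Type*} {a x : α} {l : List α} {d : ℕ}
    (h : d < (a :: l).length) (hx : (a :: l)[d] = x) (hd : d ≠ 0) : x ∈ l := by
  rcases d with _ | d
  · exact absurd rfl hd
  · simp only [List.getElem_cons_succ] at hx
    exact hx ▸ List.getElem_mem _

lemma zpos (k : ℕ)
    (hk : k < ((zSep :: xSep 0 :: runsX n m κ) ++ (zSep :: ySep 0 :: runsY n m edges)).length)
    (hz : ((zSep :: xSep 0 :: runsX n m κ) ++ (zSep :: ySep 0 :: runsY n m edges))[k] = zSep) :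
    k = 0 ∨ k = (zSep :: xSep 0 :: runsX n m κ).length := by
  by_cases hkF : k < (zSep :: xSep 0 :: runsX n m κ).length
  · left
    rw [List.getElem_append_left hkF] at hz
    by_contra hk0
    have hmem := getElem_cons_mem hkF hz hk0
    rcases List.mem_cons.1 hmem with h | h
    · exact absurd h.symm (by simp [xSep, zSep])
    · exact zSep_not_mem_runsX n m κ h
  · right
    push_neg at hkF
    rw [List.getElem_append_right hkF] at hz
    by_cases hd0 : k - (zSep :: xSep 0 :: runsX n m κ).length = 0
    · omega
    · exfalso
      have hmem := getElem_cons_mem (by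
        rw [List.length_append] at hk
        omega) hz hd0
      rcases List.mem_cons.1 hmem with h | h
      · exact absurd h.symm (by simp [ySep, zSep])
      · exact zSep_not_mem_runsY n m edges h

lemma forward (hκ : 2 ≤ κ) (σ : Blk κ → List (Letter n m)) (hne : ∀ blk, σ blk ≠ [])
    (h1 : (pattern κ false).flatMap σ = target n m κ edges)
    (h2 : (pattern κ true).flatMap σ = target n m κ edges) :
    ∃ c : Fin κ → Fin n, ∀ i j : Fin κ, i < j → ∃ e, edges e = (c i, c j) := by
  rw [flatMap_pattern, target_eq] at h1 h2
  simp only [Bool.not_false, Bool.not_true] at h1 h2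
  -- heads of the Z-blocks
  have hzhead : ∀ b, ∃ tz, σ (Blk.Z b) = zSep :: tz := by
    intro b
    have hb : ∃ R, σ (Blk.Z b) ++ R =
        (zSep :: xSep 0 :: runsX n m κ) ++ (zSep :: ySep 0 :: runsY n m edges) := by
      cases b
      · exact ⟨_, by rw [← h1, List.append_assoc]⟩
      · exact ⟨_, by rw [← h2, List.append_assoc]⟩
    obtain ⟨R, hb⟩ := hb
    rcases hσ : σ (Blk.Z b) with _ | ⟨a, tz⟩
    · exact absurd hσ (hne _)
    · rw [hσ, List.cons_append] at hb
      have ha : a = zSep := by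
        have h := congrArg List.head? hb
        simpa using h
      exact ⟨tz, by rw [ha]⟩
  obtain ⟨tzf, hzf⟩ := hzhead false
  obtain ⟨tzt, hzt⟩ := hzhead true
  -- splitting a two-part factorization of the target
  have split : ∀ U V : List (Letter n m),
      U ++ V = (zSep :: xSep 0 :: runsX n m κ) ++ (zSep :: ySep 0 :: runsY n m edges) →
      U ≠ [] → (∃ v', V = zSep :: v') →
      U = zSep :: xSep 0 :: runsX n m κ ∧ V = zSep :: ySep 0 :: runsY n m edges := by
    rintro U V hUV hU ⟨v', hv⟩
    have hUlen : U.length <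
        ((zSep :: xSep 0 :: runsX n m κ) ++ (zSep :: ySep 0 :: runsY n m edges)).length := by
      rw [← hUV, hv]; simp
    have hget0 : (U ++ V)[U.length]'(by rw [hUV]; exact hUlen) = zSep := by
      rw [List.getElem_append_right le_rfl]
      simp [hv]
    have hget : ((zSep :: xSep 0 :: runsX n m κ) ++
        (zSep :: ySep 0 :: runsY n m edges))[U.length]'hUlen = zSep :=
      (List.getElem_of_eq hUV _).symm.trans hget0
    rcases zpos U.length hUlen hget with h | h
    · exact absurd (List.eq_nil_of_length_eq_zero h) hU
    · exact List.append_inj hUV (by rw [h])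
  obtain ⟨hFf, hSf⟩ := split _ _ h1
    (fun h => hne _ ((List.append_eq_nil_iff.mp h).1))
    ⟨_, by rw [hzt]; rfl⟩
  obtain ⟨hFt, hSt⟩ := split _ _ h2
    (fun h => hne _ ((List.append_eq_nil_iff.mp h).1))
    ⟨_, by rw [hzf]; rfl⟩
  -- letters occurring in the X-blocks
  have hmemP1 : ∀ x ∈ ((List.finRange κ).flatMap fun i =>
      (((List.finRange κ).filter fun j => decide (j ≠ i)).flatMap
        fun j => σ (Blk.X false i j)) ++ σ (Blk.A i.succ)),
      (∃ w, x = xSep w) ∨ ∃ w, x = vtx w := by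
    intro x hx
    have hx2 : x ∈ xSep 0 :: runsX n m κ := by
      have h := hFf
      rw [hzf, List.cons_append] at h
      have h' := congrArg List.tail h
      simp only [List.tail_cons] at h'
      rw [← h']
      simp only [List.mem_append]
      exact Or.inr (Or.inr hx)
    rcases List.mem_cons.1 hx2 with h | h
    · exact Or.inl ⟨0, h⟩
    · exact mem_runsX n m κ h
  have hmemP2 : ∀ x ∈ ((pairs κ).flatMap fun p =>
      σ (Blk.X false p.1 p.2) ++ (σ (Blk.X false p.2 p.1) ++ σ (Blk.B p.1 p.2))),
      (∃ w, x = ySep w) ∨ ∃ w, x = vtx w := by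
    intro x hx
    have hx2 : x ∈ ySep 0 :: runsY n m edges := by
      have h := hSt
      rw [hzf, List.cons_append] at h
      have h' := congrArg List.tail h
      simp only [List.tail_cons] at h'
      rw [← h']
      simp only [List.mem_append]
      exact Or.inr (Or.inr hx)
    rcases List.mem_cons.1 hx2 with h | h
    · exact Or.inl ⟨0, h⟩
    · exact mem_runsY n m edges h
  have hXvtx : ∀ i j : Fin κ, j ≠ i → ∀ x ∈ σ (Blk.X false i j), ∃ w, x = vtx w := by
    intro i j hij x hx
    have m1 : (∃ w, x = xSep w) ∨ ∃ w, x = vtx w := by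
      apply hmemP1
      exact List.mem_flatMap.2 ⟨i, List.mem_finRange i,
        List.mem_append.2 (Or.inl (List.mem_flatMap.2 ⟨j, mem_filter_ne.2 hij, hx⟩))⟩
    have m2 : (∃ w, x = ySep w) ∨ ∃ w, x = vtx w := by
      apply hmemP2
      rcases lt_or_gt_of_ne hij with hlt | hlt
      · refine List.mem_flatMap.2 ⟨(j, i), mem_pairs.2 hlt, ?_⟩
        simp only [List.mem_append]
        exact Or.inr (Or.inl hx)
      · refine List.mem_flatMap.2 ⟨(i, j), mem_pairs.2 hlt, ?_⟩
        simp only [List.mem_append]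
        exact Or.inl hx
    rcases m2 with ⟨w, hw⟩ | h
    · rcases m1 with ⟨w', hw'⟩ | h
      · rw [hw'] at hw
        exact absurd hw (by simp [xSep, ySep])
      · exact h
    · exact h
  -- extraction of the clique vertices
  have hc : ∀ i : Fin κ, ∃ c, ∀ j, j ≠ i → σ (Blk.X false i j) = [vtx c] := by
    intro i
    obtain ⟨L1, L2, hL⟩ := List.append_of_mem (List.mem_finRange i)
    have hdec := flatMap_split (fun i =>
      (((List.finRange κ).filter fun j => decide (j ≠ i)).flatMap
        fun j => σ (Blk.X false i j)) ++ σ (Blk.A i.succ)) hL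
    have hFsplit : zSep :: xSep 0 :: runsX n m κ =
        (σ (Blk.Z false) ++ (σ (Blk.A 0) ++ (L1.flatMap fun i =>
          (((List.finRange κ).filter fun j => decide (j ≠ i)).flatMap
            fun j => σ (Blk.X false i j)) ++ σ (Blk.A i.succ)))) ++
        (((List.finRange κ).filter fun j => decide (j ≠ i)).flatMap
          fun j => σ (Blk.X false i j)) ++
        (σ (Blk.A i.succ) ++ L2.flatMap fun i =>
          (((List.finRange κ).filter fun j => decide (j ≠ i)).flatMap
            fun j => σ (Blk.X false i j)) ++ σ (Blk.A i.succ)) := by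
      rw [← hFf, hdec]
      simp [List.append_assoc]
    have hGvtx : ∀ x ∈ (((List.finRange κ).filter fun j => decide (j ≠ i)).flatMap
        fun j => σ (Blk.X false i j)), ¬ IsSep n m x := by
      intro x hx
      obtain ⟨j, hj, hxj⟩ := List.mem_flatMap.1 hx
      obtain ⟨w, rfl⟩ := hXvtx i j (mem_filter_ne.1 hj) x hxj
      exact not_isSep_vtx n m w
    have hGlen : κ - 1 ≤ (((List.finRange κ).filter fun j => decide (j ≠ i)).flatMap
        fun j => σ (Blk.X false i j)).length := by
      rw [← filter_ne_length i]
      exact length_le_length_flatMap _ _ (fun j _ => hne _)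
    obtain ⟨c, hG⟩ := RunForm.infix (by omega) (runForm_runsX n m κ (by omega))
      _ _ _ hFsplit hGvtx hGlen
    refine ⟨c, fun j hj => ?_⟩
    refine pieces_eq_singleton (fun j => σ (Blk.X false i j)) (vtx c) _
      (fun j _ => hne _) ?_ j (mem_filter_ne.2 hj)
    rw [filter_ne_length]
    exact hG
  choose c hc using hc
  refine ⟨c, fun i j hij => ?_⟩
  obtain ⟨L1, L2, hL⟩ := List.append_of_mem (mem_pairs.2 (show ((i, j) : Fin κ × Fin κ).1 < (i, j).2 from hij))
  have hdec := flatMap_split (fun p : Fin κ × Fin κ =>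
    σ (Blk.X false p.1 p.2) ++ (σ (Blk.X false p.2 p.1) ++ σ (Blk.B p.1 p.2))) hL
  have hSsplit : zSep :: ySep 0 :: runsY n m edges =
      (σ (Blk.Z false) ++ (σ Blk.B0 ++ (L1.flatMap fun p =>
        σ (Blk.X false p.1 p.2) ++ (σ (Blk.X false p.2 p.1) ++ σ (Blk.B p.1 p.2))))) ++
      [vtx (c i), vtx (c j)] ++
      (σ (Blk.B i j) ++ L2.flatMap fun p =>
        σ (Blk.X false p.1 p.2) ++ (σ (Blk.X false p.2 p.1) ++ σ (Blk.B p.1 p.2))) := by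
    rw [← hSt, hdec]
    simp [hc i j hij.ne', hc j i hij.ne, List.append_assoc]
  obtain ⟨e, he⟩ := RunForm.infix (by omega) (runForm_runsY n m edges)
    _ _ _ hSsplit (by
      intro x hx
      rcases List.mem_cons.1 hx with rfl | hx
      · exact not_isSep_vtx n m _
      rcases List.mem_cons.1 hx with rfl | hx
      · exact not_isSep_vtx n m _
      · simp at hx) (by simp)
  refine ⟨e, ?_⟩
  simp only [vtx, List.cons.injEq, Sum.inl.injEq, and_true] at he
  exact Prod.ext he.1.symm he.2.symm

end Forward

section NeNil

variable {n m κ : ℕ} {edges : Fin m → Fin n × Fin n} {u : Fin κ → Fin n}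
  {E N : Fin κ × Fin κ → ℕ}

lemma asg_ne_nil (hκ : 2 ≤ κ) (hu : StrictMono u)
    (hEm : ∀ p : Fin κ × Fin κ, p.1 < p.2 → E p < m)
    (hEmono : ∀ t (h : t + 1 < (pairs κ).length),
      E ((pairs κ)[t]'(by omega)) < E ((pairs κ)[t + 1]'h))
    (hN : ∀ (t : ℕ) (ht : t < (pairs κ).length), N ((pairs κ)[t]) = posB m κ E (t + 1)) :
    ∀ blk, asg n m κ edges u E N blk ≠ [] := by
  intro blk
  cases blk with
  | Z b => simp [asg]
  | X b i j => simp [asg]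
  | B0 => simp [asg]
  | A t =>
    by_cases h0 : (t : ℕ) = 0
    · simp [asg, h0]
    · simp only [asg, if_neg h0]
      apply List.ne_nil_of_length_pos
      rw [List.length_take, List.length_drop, length_runsX n m κ (by omega)]
      have h1 : (t : ℕ) - 1 < κ := by have := t.isLt; omega
      have h2 := posA_step hu h1
      rw [show (t : ℕ) - 1 + 1 = (t : ℕ) from by omega] at h2
      have h4 : posA n κ u (t : ℕ) ≤ n * κ := posA_le _
      rw [lt_min_iff]
      exact ⟨by omega, by omega⟩
  | B i j =>
    by_cases hmem : (i, j) ∈ pairs κ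
    · simp only [asg, if_pos hmem]
      apply List.ne_nil_of_length_pos
      rw [List.length_take, List.length_drop, length_runsY]
      obtain ⟨t, ht, hpt⟩ := List.getElem_of_mem hmem
      have hEmlt : E (i, j) < m := hEm (i, j) (mem_pairs.1 hmem)
      have hNt : N (i, j) = posB m κ E (t + 1) := by rw [← hpt]; exact hN t ht
      have hge : E (i, j) * 3 + 3 ≤ posB m κ E (t + 1) := by
        by_cases h : t + 1 < (pairs κ).length
        · have h5 := hEmono t h
          rw [hpt] at h5
          simp only [posB, dif_pos h]
          omega
        · simp only [posB, dif_neg h]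
          omega
      rw [lt_min_iff]
      exact ⟨by omega, by omega⟩
    · simp [asg, hmem]

end NeNil

theorem stmt_6_aux (n m κ : ℕ) (hκ : 2 ≤ κ)
    (edges : Fin m → Fin n × Fin n)
    (horder : ∀ j, (edges j).1 < (edges j).2)
    (hsorted : ∀ j j' : Fin m, j < j' →
      (edges j).1 < (edges j').1 ∨
        ((edges j).1 = (edges j').1 ∧ (edges j).2 < (edges j').2)) :
    (∃ σ : Blk κ → List (Letter n m),
        (∀ b, σ b ≠ []) ∧
        (pattern κ false).flatMap σ = target n m κ edges ∧
        (pattern κ true).flatMap σ = target n m κ edges) ↔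
    (∃ S : Finset (Fin n), S.card = κ ∧
        ∀ u ∈ S, ∀ w ∈ S, u ≠ w →
          ∃ j : Fin m, edges j = (u, w) ∨ edges j = (w, u)) := by
  constructor
  · rintro ⟨σ, hne, h1, h2⟩
    obtain ⟨c, hc⟩ := forward hκ σ hne h1 h2
    have hmono : StrictMono c := by
      intro i j hij
      obtain ⟨e, he⟩ := hc i j hij
      have h := horder e
      rw [he] at h
      exact h
    refine ⟨Finset.image c Finset.univ, ?_, ?_⟩
    · rw [Finset.card_image_of_injective _ hmono.injective, Finset.card_univ,
        Fintype.card_fin]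
    · intro a ha b hb hab
      obtain ⟨i, -, rfl⟩ := Finset.mem_image.1 ha
      obtain ⟨j, -, rfl⟩ := Finset.mem_image.1 hb
      rcases lt_trichotomy i j with h | h | h
      · obtain ⟨e, he⟩ := hc i j h
        exact ⟨e, Or.inl he⟩
      · exact absurd (congrArg c h) hab
      · obtain ⟨e, he⟩ := hc j i h
        exact ⟨e, Or.inr he⟩
  · rintro ⟨S, hcard, hcl⟩
    classical
    set u : Fin κ → Fin n := ⇑(S.orderEmbOfFin hcard) with hudef
    have humono : StrictMono u := (S.orderEmbOfFin hcard).strictMono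
    have hedge : ∀ i j : Fin κ, i < j → ∃ e, edges e = (u i, u j) := by
      intro i j hij
      obtain ⟨e, he | he⟩ := hcl (u i) (S.orderEmbOfFin_mem hcard i)
        (u j) (S.orderEmbOfFin_mem hcard j) (humono hij).ne
      · exact ⟨e, he⟩
      · exfalso
        have h := horder e
        rw [he] at h
        exact absurd h (lt_asymm (humono hij))
    set E : Fin κ × Fin κ → ℕ := fun p =>
      if h : ∃ e : Fin m, edges e = (u p.1, u p.2) then (h.choose : ℕ) else 0 with hEdef
    have hE : ∀ p : Fin κ × Fin κ, p.1 < p.2 →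
        ∃ he : E p < m, edges ⟨E p, he⟩ = (u p.1, u p.2) := by
      intro p hp
      have hex : ∃ e : Fin m, edges e = (u p.1, u p.2) := hedge p.1 p.2 hp
      have hEp : E p = (hex.choose : ℕ) := by rw [hEdef]; simp only [dif_pos hex]
      refine ⟨by rw [hEp]; exact hex.choose.isLt, ?_⟩
      have heq : (⟨E p, by rw [hEp]; exact hex.choose.isLt⟩ : Fin m) = hex.choose := by
        apply Fin.ext; simpa using hEp
      rw [heq]
      exact hex.choose_spec
    have hEmono : ∀ p q : Fin κ × Fin κ, p.1 < p.2 → q.1 < q.2 → PLex p q → E p < E q := by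
      intro p q hp hq hlex
      obtain ⟨hpm, hpe⟩ := hE p hp
      obtain ⟨hqm, hqe⟩ := hE q hq
      by_contra hle
      push_neg at hle
      rcases Nat.lt_or_ge (E q) (E p) with hlt | hge
      · have hs := hsorted ⟨E q, hqm⟩ ⟨E p, hpm⟩ hlt
        rw [hpe, hqe] at hs
        simp only at hs
        rcases hlex with h | ⟨h1, h2⟩
        · rcases hs with hs | ⟨hs1, hs2⟩
          · exact absurd (humono h) (lt_asymm hs)
          · exact absurd (humono h) (by rw [hs1]; exact lt_irrefl _)
        · rcases hs with hs | ⟨hs1, hs2⟩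
          · rw [h1] at hs; exact lt_irrefl _ hs
          · exact absurd (humono h2) (lt_asymm hs2)
      · have heq : E p = E q := by omega
        have he : (u p.1, u p.2) = (u q.1, u q.2) := by
          rw [← hpe, ← hqe]
          congr 1
          exact Fin.ext heq
        have h1 : p.1 = q.1 := humono.injective (congrArg Prod.fst he)
        have h2 : p.2 = q.2 := humono.injective (congrArg Prod.snd he)
        rcases hlex with h | ⟨-, h⟩
        · rw [h1] at h; exact lt_irrefl _ h
        · rw [h2] at h; exact lt_irrefl _ h
    have hEmono' : ∀ t (h : t + 1 < (pairs κ).length),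
        E ((pairs κ)[t]'(by omega)) < E ((pairs κ)[t + 1]'h) := by
      intro t h
      have hlex := List.pairwise_iff_getElem.1 pairs_pairwise t (t + 1) (by omega) h (by omega)
      exact hEmono _ _ (mem_pairs.1 (List.getElem_mem _)) (mem_pairs.1 (List.getElem_mem _)) hlex
    set N : Fin κ × Fin κ → ℕ := fun p =>
      if h : ∃ t, ∃ _ : t < (pairs κ).length, (pairs κ)[t] = p then
        posB m κ E (h.choose + 1) else 0 with hNdef
    have hN : ∀ (t : ℕ) (ht : t < (pairs κ).length),
        N ((pairs κ)[t]) = posB m κ E (t + 1) := by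
      intro t ht
      have hex : ∃ t', ∃ _ : t' < (pairs κ).length, (pairs κ)[t'] = (pairs κ)[t]'ht :=
        ⟨t, ht, rfl⟩
      rw [hNdef]
      simp only [dif_pos hex]
      congr 1
      obtain ⟨ht', hp'⟩ := hex.choose_spec
      by_contra hne'
      rcases Nat.lt_or_ge hex.choose t with hlt | hge
      · have := List.pairwise_iff_getElem.1 pairs_pairwise _ _ ht' ht hlt
        rw [hp'] at this
        rcases this with h | ⟨-, h⟩ <;> exact absurd h (lt_irrefl _)
      · have hgt : t < hex.choose := by omega
        have := List.pairwise_iff_getElem.1 pairs_pairwise _ _ ht ht' hgt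
        rw [hp'] at this
        rcases this with h | ⟨-, h⟩ <;> exact absurd h (lt_irrefl _)
    refine ⟨asg n m κ edges u E N, ?_, ?_, ?_⟩
    · exact asg_ne_nil hκ humono (fun p hp => by obtain ⟨h, -⟩ := hE p hp; exact h) hEmono' hN
    · exact asg_flatMap hκ humono hE hEmono' hN false
    · exact asg_flatMap hκ humono hE hEmono' hN true


/-- **correctness of the reduction in Theorem 4.2.** Let `κ ≥ 2` and let
`G` be a graph on `{v₀, …, v_{n-1}}` whose edge list `e₀, …, e_{m-1}` (each edge an
ordered pair, smaller endpoint first) is sorted lexicographically. The system of the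
two duplicate-free equations `T ≡ 𝒳`, `T ≡ 𝒳'` (same target) is satisfied by some
assignment of nonempty strings to the blocks iff `G` has a clique of size `κ`. -/
theorem stmt_6 (n m κ : ℕ) (hκ : 2 ≤ κ)
    (edges : Fin m → Fin n × Fin n)
    (horder : ∀ j, (edges j).1 < (edges j).2)
    (hsorted : ∀ j j' : Fin m, j < j' →
      (edges j).1 < (edges j').1 ∨
        ((edges j).1 = (edges j').1 ∧ (edges j).2 < (edges j').2)) :
    (∃ σ : Blk κ → List (Letter n m),
        (∀ b, σ b ≠ []) ∧
        (pattern κ false).flatMap σ = target n m κ edges ∧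
        (pattern κ true).flatMap σ = target n m κ edges) ↔
    (∃ S : Finset (Fin n), S.card = κ ∧
        ∀ u ∈ S, ∀ w ∈ S, u ≠ w →
          ∃ j : Fin m, edges j = (u, w) ∨ edges j = (w, u)) :=
  stmt_6_aux n m κ hκ edges horder hsorted

end Stmt6
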